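/- The determinant of the 3x3 matrix N with rows (u, -a*d*y, -a*d*x - b*d*y), (x, u - b*x - c*y, -c*x - d*y), (y, a*x, u - c*y) is a multiplicative function of (u,x,y): det applied to the composition (u3,x3,y3) given by u3 = u1*u2 - a*d*x2*y1 - a*d*x1*y2 - b*d*y1*y2, x3 = u1*x2 + u2*x1 - b*x1*x2 - c*x1*y2 - c*x2*y1 - d*y1*y2, y3 = u1*y2 + u2*y1 + a*x1*x2 - c*y1*y2 equals the product of the determinants at (u1,x1,y1) and (u2,x2,y2). -/
import Mathlib

set_option maxHeartbeats 4000000 in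
theorem cubic_det_multiplicative {R : Type*} [CommRing R] (a b c d u1 x1 y1 u2 x2 y2 : R) :
    (let N : R → R → R → Matrix (Fin 3) (Fin 3) R := fun u x y =>
       !![u, -a * d * y, -a * d * x - b * d * y;
          x, u - b * x - c * y, -c * x - d * y;
          y, a * x, u - c * y]
     let u3 := u1 * u2 - a * d * x2 * y1 - a * d * x1 * y2 - b * d * y1 * y2
     let x3 := u1 * x2 + u2 * x1 - b * x1 * x2 - c * x1 * y2 - c * x2 * y1 - d * y1 * y2
     let y3 := u1 * y2 + u2 * y1 + a * x1 * x2 - c * y1 * y2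
     (N u3 x3 y3).det = (N u1 x1 y1).det * (N u2 x2 y2).det) := by
  simp only
  rw [Matrix.det_fin_three, Matrix.det_fin_three, Matrix.det_fin_three]
  simp only [Matrix.of_apply, Matrix.cons_val_zero, Matrix.cons_val_one, Matrix.head_cons,
    Matrix.cons_val_two, Matrix.tail_cons, Matrix.head_fin_const]
  ring
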